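/- For every real α > 0 and every ψ ∈ (0, π): K_α(ψ) = 2√π · e^{α/4} · (ψ / sin ψ) · α^{−3/2} · e^{−ψ²/α} · F_α(ψ). -/

import Mathlib

open Real

/-- The SU(2) heat kernel at time `α`, as a function of the class angle `ψ`:
`K_α(ψ) = Σ_{m≥1} m · e^{-α(m²-1)/4} · sin(mψ)/sin(ψ)`. -/
noncomputable def Kheat (α ψ : ℝ) : ℝ :=
  ∑' m : ℕ, ((m : ℝ) + 1) * Real.exp (-α * (((m : ℝ) + 1) ^ 2 - 1) / 4) *
    Real.sin (((m : ℝ) + 1) * ψ) / Real.sin ψ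

/-- The correction factor appearing in the Poisson-resummed form of the SU(2) heat
kernel: `F_α(ψ) = 1 + Σ_{n≥1} e^{-4π²n²/α} (2 cosh(4πnψ/α) - (4πn/ψ) sinh(4πnψ/α))`. -/
noncomputable def Fcorr (α ψ : ℝ) : ℝ :=
  1 + ∑' n : ℕ, Real.exp (-4 * π ^ 2 * ((n : ℝ) + 1) ^ 2 / α) *
    (2 * Real.cosh (4 * π * ((n : ℝ) + 1) * ψ / α) -
      (4 * π * ((n : ℝ) + 1) / ψ) * Real.sinh (4 * π * ((n : ℝ) + 1) * ψ / α))

private lemma hasSum_ofReal_elim {f : ℕ → ℝ} {w : ℂ}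
    (h : HasSum (fun n => ((f n : ℝ) : ℂ)) w) : HasSum f w.re ∧ w = ((w.re : ℝ) : ℂ) := by
  have h1 : HasSum f w.re := by
    have := Complex.reCLM.hasSum h
    simpa using this
  have h2 : HasSum (fun n => ((f n : ℝ) : ℂ)) ((w.re : ℝ) : ℂ) := by
    have := Complex.ofRealCLM.hasSum h1
    simpa using this
  exact ⟨h1, h.unique h2⟩

set_option maxHeartbeats 1000000 in
/-- Poisson-resummed representation of the SU(2) heat kernel: for `α > 0` and
`ψ ∈ (0, π)`, `K_α(ψ) = 2√π · e^{α/4} · (ψ/sin ψ) · α^{-3/2} · e^{-ψ²/α} · F_α(ψ)`. -/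
theorem stmt4 (α ψ : ℝ) (hα : 0 < α) (hψ : ψ ∈ Set.Ioo 0 π) :
    Kheat α ψ = 2 * Real.sqrt π * Real.exp (α / 4) * (ψ / Real.sin ψ) *
      α ^ (-(3 : ℝ) / 2) * Real.exp (-ψ ^ 2 / α) * Fcorr α ψ := by
  obtain ⟨hψ0, hψπ⟩ := hψ
  have hπ0 : (0:ℝ) < π := Real.pi_pos
  have hsin : 0 < Real.sin ψ := Real.sin_pos_of_pos_of_lt_pi hψ0 hψπ
  have hαne : (α:ℂ) ≠ 0 := by exact_mod_cast hα.ne'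
  have hπne : (π:ℂ) ≠ 0 := by exact_mod_cast hπ0.ne'
  set z : ℂ := ((ψ / (2*π) : ℝ) : ℂ) with hz
  set τ : ℂ := ((α / (4*π) : ℝ) : ℂ) * Complex.I with hτdef
  have hcpos : (0:ℝ) < α / (4*π) := by positivity
  have hτ0 : τ ≠ 0 := by
    rw [hτdef]
    simp [Complex.I_ne_zero, Complex.ofReal_eq_zero, hcpos.ne', hα.ne', hπ0.ne']
  have hτim : 0 < τ.im := by
    rw [hτdef, Complex.mul_im, Complex.I_im, Complex.I_re, Complex.ofReal_re, Complex.ofReal_im]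
    simpa using hcpos
  -- exponent computation for the left theta function
  have e1 : ∀ n : ℤ, 2 * (π:ℂ) * Complex.I * n * z + (π:ℂ) * Complex.I * n^2 * τ
      = ((-(n^2 * α) / 4 : ℝ):ℂ) + ((n * ψ : ℝ):ℂ) * Complex.I := by
    intro n
    rw [hz, hτdef]
    push_cast
    field_simp
    ring_nf
    simp only [Complex.I_sq]
    ring
  have hterm : ∀ n : ℤ, jacobiTheta₂'_term n z τ + jacobiTheta₂'_term (-n) z τ
      = ((-4 * π * n * Real.exp (-(n^2 * α) / 4) * Real.sin (n * ψ) : ℝ) : ℂ) := by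
    intro n
    simp only [jacobiTheta₂'_term, jacobiTheta₂_term]
    rw [e1 n, e1 (-n)]
    push_cast
    rw [Complex.exp_add, Complex.exp_add, Complex.exp_mul_I, Complex.exp_mul_I]
    simp only [Complex.sin_neg, Complex.cos_neg, neg_mul, neg_neg, neg_sq, mul_neg]
    ring_nf
    simp only [Complex.I_sq]
    ring
  have Hsum := hasSum_jacobiTheta₂'_term z hτim
  have H2 := Hsum.nat_add_neg
  have hzero : jacobiTheta₂'_term 0 z τ = 0 := by
    simp [jacobiTheta₂'_term]
  rw [hzero, add_zero] at H2
  have H2' : HasSum (fun n : ℕ =>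
      ((-4 * π * n * Real.exp (-((n:ℝ)^2 * α) / 4) * Real.sin (n * ψ) : ℝ) : ℂ))
      (jacobiTheta₂' z τ) := by
    have hfe : (fun n : ℕ => jacobiTheta₂'_term (n:ℤ) z τ + jacobiTheta₂'_term (-(n:ℤ)) z τ)
        = fun n : ℕ => ((-4 * π * n * Real.exp (-((n:ℝ)^2 * α) / 4) * Real.sin (n * ψ) : ℝ) : ℂ) := by
      funext n
      rw [hterm (n:ℤ)]
      push_cast
      ring_nf
    rwa [hfe] at H2
  have H3 : HasSum (fun n : ℕ =>
      ((-4 * π * ((n:ℝ)+1) * Real.exp (-(((n:ℝ)+1)^2 * α) / 4) * Real.sin (((n:ℝ)+1) * ψ) : ℝ) : ℂ))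
      (jacobiTheta₂' z τ) := by
    have := (hasSum_nat_add_iff' (f := fun n : ℕ =>
      ((-4 * π * (n:ℝ) * Real.exp (-((n:ℝ)^2 * α) / 4) * Real.sin ((n:ℝ) * ψ) : ℝ) : ℂ)) 1).mpr H2'
    simp only [Finset.range_one, Finset.sum_singleton, Nat.cast_zero] at this
    norm_num at this
    convert this using 2 with n
    · rfl
    push_cast
    ring_nf
  -- right-hand side theta functions
  have hinvτ : (-1/τ) = ((4*π/α : ℝ):ℂ) * Complex.I := by
    have hm : ((4*π/α : ℝ) * (α/(4*π) : ℝ)) = 1 := by field_simp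
    rw [div_eq_iff hτ0, hτdef]
    calc (-1 : ℂ) = ↑((4*π/α : ℝ) * (α/(4*π) : ℝ)) * (Complex.I * Complex.I) := by
          rw [hm, Complex.I_mul_I]; norm_num
      _ = ((4*π/α : ℝ):ℂ) * Complex.I * (((α/(4*π) : ℝ)):ℂ) * Complex.I := by
          push_cast; ring
      _ = _ := by ring
  have hτ'im : 0 < (-1/τ).im := by
    rw [hinvτ, Complex.mul_im, Complex.I_im, Complex.I_re, Complex.ofReal_re, Complex.ofReal_im]
    simpa using by positivity
  have hzdivτ : z/τ = ((2*ψ/α : ℝ):ℂ) * (-Complex.I) := by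
    have hm : ((2*ψ/α : ℝ) * (α/(4*π) : ℝ)) = ψ/(2*π) := by field_simp; ring
    rw [div_eq_iff hτ0, hz, hτdef]
    calc ((ψ/(2*π) : ℝ):ℂ) = ↑((2*ψ/α : ℝ) * (α/(4*π) : ℝ)) * (-(Complex.I * Complex.I)) := by
          rw [hm, Complex.I_mul_I]; norm_num
      _ = _ := by push_cast; ring
  -- exponent computation for the right theta function
  have e2 : ∀ n : ℤ, 2 * (π:ℂ) * Complex.I * n * (z/τ) + (π:ℂ) * Complex.I * n^2 * (-1/τ)
      = ((4*π*n*ψ/α - 4*π^2*n^2/α : ℝ):ℂ) := by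
    intro n
    rw [hzdivτ, hinvτ]
    push_cast
    ring_nf
    simp only [Complex.I_sq]
    ring
  have hΘterm : ∀ n : ℤ, jacobiTheta₂_term n (z/τ) (-1/τ)
      = ((Real.exp (4*π*n*ψ/α - 4*π^2*n^2/α) : ℝ):ℂ) := by
    intro n
    simp only [jacobiTheta₂_term]
    rw [e2 n, Complex.ofReal_exp]
  -- real exponential recombination lemmas
  have hcoshkey : ∀ x a : ℝ, Real.exp (x - a) + Real.exp (-x - a)
      = Real.exp (-a) * (2 * Real.cosh x) := by
    intro x a
    rw [Real.cosh_eq, show x - a = x + -a by ring, show -x - a = -x + -a by ring]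
    simp only [Real.exp_add, Real.exp_neg]
    ring
  have hsinhkey : ∀ x a : ℝ, Real.exp (x - a) - Real.exp (-x - a)
      = Real.exp (-a) * (2 * Real.sinh x) := by
    intro x a
    rw [Real.sinh_eq, show x - a = x + -a by ring, show -x - a = -x + -a by ring]
    simp only [Real.exp_add, Real.exp_neg]
    ring
  -- the cosh sum
  have pairC : ∀ n : ℤ, jacobiTheta₂_term n (z/τ) (-1/τ) + jacobiTheta₂_term (-n) (z/τ) (-1/τ)
      = ((Real.exp (-(4*π^2*n^2/α)) * (2 * Real.cosh (4*π*n*ψ/α)) : ℝ):ℂ) := by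
    intro n
    rw [hΘterm n, hΘterm (-n), ← Complex.ofReal_add, Complex.ofReal_inj]
    push_cast
    rw [← hcoshkey (4*π*(n:ℝ)*ψ/α) (4*π^2*(n:ℝ)^2/α)]
    ring_nf
  have HC0 := (hasSum_jacobiTheta₂_term (z/τ) hτ'im).nat_add_neg
  have hC1 : HasSum (fun n : ℕ =>
      ((Real.exp (-(4*π^2*((n:ℝ))^2/α)) * (2 * Real.cosh (4*π*((n:ℝ))*ψ/α)) : ℝ):ℂ))
      (jacobiTheta₂ (z/τ) (-1/τ) + 1) := by
    have h0 : jacobiTheta₂_term 0 (z/τ) (-1/τ) = 1 := by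
      simp [jacobiTheta₂_term]
    rw [h0] at HC0
    have hfe : (fun n : ℕ => jacobiTheta₂_term (n:ℤ) (z/τ) (-1/τ)
          + jacobiTheta₂_term (-(n:ℤ)) (z/τ) (-1/τ))
        = fun n : ℕ =>
          ((Real.exp (-(4*π^2*((n:ℝ))^2/α)) * (2 * Real.cosh (4*π*((n:ℝ))*ψ/α)) : ℝ):ℂ) := by
      funext n
      rw [pairC (n:ℤ)]
      push_cast
      ring_nf
    rwa [hfe] at HC0
  have hC2 : HasSum (fun n : ℕ =>
      ((Real.exp (-(4*π^2*((n:ℝ)+1)^2/α)) * (2 * Real.cosh (4*π*((n:ℝ)+1)*ψ/α)) : ℝ):ℂ))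
      (jacobiTheta₂ (z/τ) (-1/τ) - 1) := by
    have := (hasSum_nat_add_iff' (f := fun n : ℕ =>
      ((Real.exp (-(4*π^2*((n:ℝ))^2/α)) * (2 * Real.cosh (4*π*((n:ℝ))*ψ/α)) : ℝ):ℂ)) 1).mpr hC1
    simp only [Finset.range_one, Finset.sum_singleton, Nat.cast_zero] at this
    norm_num at this
    rw [show jacobiTheta₂ (z / τ) (-1 / τ) + 1 - 2 = jacobiTheta₂ (z / τ) (-1 / τ) - 1 by ring] at this
    convert this using 2 with n
    · rfl
    push_cast
    ring_nf
  obtain ⟨hCsum, hCval⟩ := hasSum_ofReal_elim hC2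
  set C : ℝ := (jacobiTheta₂ (z/τ) (-1/τ) - 1).re with hCdef
  have hΘval : jacobiTheta₂ (z/τ) (-1/τ) = ((C : ℝ):ℂ) + 1 := by
    rw [← hCval]; ring
  -- the sinh sum
  have pairS : ∀ n : ℤ, jacobiTheta₂'_term n (z/τ) (-1/τ) + jacobiTheta₂'_term (-n) (z/τ) (-1/τ)
      = Complex.I * ((Real.exp (-(4*π^2*n^2/α)) * (2*π*n * (2 * Real.sinh (4*π*n*ψ/α))) : ℝ):ℂ) := by
    intro n
    simp only [jacobiTheta₂'_term]
    rw [hΘterm n, hΘterm (-n)]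
    have hre : Real.exp (-(4*π^2*(n:ℝ)^2/α)) * (2*π*(n:ℝ) * (2 * Real.sinh (4*π*(n:ℝ)*ψ/α)))
        = 2*π*(n:ℝ) * (Real.exp (4*π*(n:ℝ)*ψ/α - 4*π^2*(n:ℝ)^2/α)
            - Real.exp (-(4*π*(n:ℝ)*ψ/α) - 4*π^2*(n:ℝ)^2/α)) := by
      rw [hsinhkey (4*π*(n:ℝ)*ψ/α) (4*π^2*(n:ℝ)^2/α)]
      ring
    rw [hre]
    push_cast
    ring_nf
  have HS0 := (hasSum_jacobiTheta₂'_term (z/τ) hτ'im).nat_add_neg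
  have hS1 : HasSum (fun n : ℕ =>
      ((Real.exp (-(4*π^2*((n:ℝ))^2/α)) * (2*π*((n:ℝ)) * (2 * Real.sinh (4*π*((n:ℝ))*ψ/α))) : ℝ):ℂ))
      (-(Complex.I * jacobiTheta₂' (z/τ) (-1/τ))) := by
    have h0 : jacobiTheta₂'_term 0 (z/τ) (-1/τ) = 0 := by
      simp [jacobiTheta₂'_term]
    rw [h0, add_zero] at HS0
    have hfe : (fun n : ℕ => jacobiTheta₂'_term (n:ℤ) (z/τ) (-1/τ)
          + jacobiTheta₂'_term (-(n:ℤ)) (z/τ) (-1/τ))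
        = fun n : ℕ => Complex.I *
          ((Real.exp (-(4*π^2*((n:ℝ))^2/α)) * (2*π*((n:ℝ)) * (2 * Real.sinh (4*π*((n:ℝ))*ψ/α))) : ℝ):ℂ) := by
      funext n
      rw [pairS (n:ℤ)]
      push_cast
      ring_nf
    rw [hfe] at HS0
    have := HS0.mul_left (-Complex.I)
    have hfe2 : (fun n : ℕ => -Complex.I * (Complex.I *
          ((Real.exp (-(4*π^2*((n:ℝ))^2/α)) * (2*π*((n:ℝ)) * (2 * Real.sinh (4*π*((n:ℝ))*ψ/α))) : ℝ):ℂ)))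
        = fun n : ℕ =>
          ((Real.exp (-(4*π^2*((n:ℝ))^2/α)) * (2*π*((n:ℝ)) * (2 * Real.sinh (4*π*((n:ℝ))*ψ/α))) : ℝ):ℂ) := by
      funext n
      rw [← mul_assoc, neg_mul, Complex.I_mul_I, neg_neg, one_mul]
    rw [hfe2] at this
    rwa [neg_mul] at this
  have hS2 : HasSum (fun n : ℕ =>
      ((Real.exp (-(4*π^2*((n:ℝ)+1)^2/α)) * (2*π*((n:ℝ)+1) * (2 * Real.sinh (4*π*((n:ℝ)+1)*ψ/α))) : ℝ):ℂ))
      (-(Complex.I * jacobiTheta₂' (z/τ) (-1/τ))) := by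
    have := (hasSum_nat_add_iff' (f := fun n : ℕ =>
      ((Real.exp (-(4*π^2*((n:ℝ))^2/α)) * (2*π*((n:ℝ)) * (2 * Real.sinh (4*π*((n:ℝ))*ψ/α))) : ℝ):ℂ)) 1).mpr hS1
    simp only [Finset.range_one, Finset.sum_singleton, Nat.cast_zero] at this
    norm_num at this
    convert this using 2 with n
    · rfl
    push_cast
    ring_nf
  obtain ⟨hSsum, hSval⟩ := hasSum_ofReal_elim hS2
  set S : ℝ := (-(Complex.I * jacobiTheta₂' (z/τ) (-1/τ))).re with hSdef
  have hΘ'val : jacobiTheta₂' (z/τ) (-1/τ) = Complex.I * ((S : ℝ):ℂ) := by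
    have h2 : Complex.I * ((S : ℝ):ℂ) = jacobiTheta₂' (z/τ) (-1/τ) := by
      rw [← hSval, mul_neg, ← mul_assoc, Complex.I_mul_I, neg_one_mul, neg_neg]
    exact h2.symm
  -- functional equation: compute the constants
  have hcne : ((α/(4*π) : ℝ):ℂ) ≠ 0 := by
    simpa using hcpos.ne'
  have hpow : (-Complex.I * τ) ^ (1/2 : ℂ) = ((Real.sqrt (α/(4*π)) : ℝ):ℂ) := by
    have h1 : -Complex.I * τ = ((α/(4*π) : ℝ):ℂ) := by
      rw [hτdef]
      linear_combination (-(((α/(4*π) : ℝ)):ℂ)) * Complex.I_mul_I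
    rw [h1, show (1/2 : ℂ) = ((1/2 : ℝ):ℂ) by norm_num, ← Complex.ofReal_cpow hcpos.le]
    rw [Real.sqrt_eq_rpow]
  have hsqpos : 0 < Real.sqrt (α/(4*π)) := Real.sqrt_pos.mpr hcpos
  have hsqne : ((Real.sqrt (α/(4*π)) : ℝ):ℂ) ≠ 0 := by
    simpa using hsqpos.ne'
  have hexpz : Complex.exp (-(π:ℂ) * Complex.I * z^2 / τ) = ((Real.exp (-ψ^2/α) : ℝ):ℂ) := by
    have harg : -(π:ℂ) * Complex.I * z^2 / τ = ((-ψ^2/α : ℝ):ℂ) := by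
      rw [div_eq_iff hτ0, hz, hτdef]
      push_cast
      field_simp
      ring
    rw [harg, Complex.ofReal_exp]
  set R : ℝ := Real.exp (-ψ^2/α) * (4*π/α) * (S - ψ*(C+1)) / Real.sqrt (α/(4*π)) with hRdef
  have hT' : jacobiTheta₂' z τ = ((R : ℝ):ℂ) := by
    rw [jacobiTheta₂'_functional_equation z τ, hpow, hexpz, hΘ'val, hΘval, hRdef, hτdef, hz]
    push_cast
    field_simp
  -- final assembly of the left-hand side
  rw [hT'] at H3
  obtain ⟨hBsum', _⟩ := hasSum_ofReal_elim H3
  have hBsum : HasSum (fun n : ℕ =>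
      -4 * π * ((n:ℝ)+1) * Real.exp (-(((n:ℝ)+1)^2 * α) / 4) * Real.sin (((n:ℝ)+1) * ψ)) R := by
    simpa using hBsum'
  have hK : HasSum (fun m : ℕ => ((m : ℝ) + 1) * Real.exp (-α * (((m : ℝ) + 1) ^ 2 - 1) / 4) *
      Real.sin (((m : ℝ) + 1) * ψ) / Real.sin ψ)
      (Real.exp (α/4) / (Real.sin ψ * (-4*π)) * R) := by
    have h := hBsum.mul_left (Real.exp (α/4) / (Real.sin ψ * (-4*π)))
    have hfun : (fun n : ℕ => Real.exp (α/4) / (Real.sin ψ * (-4*π)) *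
          (-4 * π * ((n:ℝ)+1) * Real.exp (-(((n:ℝ)+1)^2 * α) / 4) * Real.sin (((n:ℝ)+1) * ψ)))
        = fun m : ℕ => ((m : ℝ) + 1) * Real.exp (-α * (((m : ℝ) + 1) ^ 2 - 1) / 4) *
          Real.sin (((m : ℝ) + 1) * ψ) / Real.sin ψ := by
      funext n
      rw [show -α * (((n:ℝ)+1)^2 - 1) / 4 = α/4 + (-(((n:ℝ)+1)^2 * α) / 4) by ring, Real.exp_add]
      field_simp
    rwa [hfun] at h
  have hKeq : Kheat α ψ = Real.exp (α/4) / (Real.sin ψ * (-4*π)) * R := by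
    unfold Kheat
    exact hK.tsum_eq
  -- Fcorr
  have hFsum : HasSum (fun n : ℕ => Real.exp (-4 * π ^ 2 * ((n : ℝ) + 1) ^ 2 / α) *
      (2 * Real.cosh (4 * π * ((n : ℝ) + 1) * ψ / α) -
        (4 * π * ((n : ℝ) + 1) / ψ) * Real.sinh (4 * π * ((n : ℝ) + 1) * ψ / α)))
      (C - S/ψ) := by
    have h := hCsum.sub (hSsum.mul_left (1/ψ))
    have hfun : (fun n : ℕ =>
          Real.exp (-(4*π^2*((n:ℝ)+1)^2/α)) * (2 * Real.cosh (4*π*((n:ℝ)+1)*ψ/α))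
          - 1/ψ * (Real.exp (-(4*π^2*((n:ℝ)+1)^2/α)) * (2*π*((n:ℝ)+1) * (2 * Real.sinh (4*π*((n:ℝ)+1)*ψ/α)))))
        = fun n : ℕ => Real.exp (-4 * π ^ 2 * ((n : ℝ) + 1) ^ 2 / α) *
          (2 * Real.cosh (4 * π * ((n : ℝ) + 1) * ψ / α) -
            (4 * π * ((n : ℝ) + 1) / ψ) * Real.sinh (4 * π * ((n : ℝ) + 1) * ψ / α)) := by
      funext n
      rw [show -4 * π ^ 2 * ((n : ℝ) + 1) ^ 2 / α = -(4*π^2*((n:ℝ)+1)^2/α) by ring]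
      field_simp
      ring
    rw [hfun] at h
    convert h using 1
    · rfl
    rw [one_div]
    ring
  have hFeq : Fcorr α ψ = 1 + (C - S/ψ) := by
    unfold Fcorr
    rw [hFsum.tsum_eq]
  -- final arithmetic
  rw [hKeq, hFeq, hRdef]
  have hsqrt : Real.sqrt (α/(4*π)) = Real.sqrt α / (2 * Real.sqrt π) := by
    rw [show α/(4*π) = α / (4*π) from rfl, Real.sqrt_div hα.le]
    congr 1
    rw [show (4:ℝ)*π = 2^2*π by norm_num, Real.sqrt_mul (by positivity) π, Real.sqrt_sq (by norm_num : (0:ℝ) ≤ 2)]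
  have hα32 : α ^ (-(3:ℝ)/2) = (α * Real.sqrt α)⁻¹ := by
    rw [show -(3:ℝ)/2 = -(3/2) by ring, Real.rpow_neg hα.le]
    congr 1
    rw [show (3/2 : ℝ) = 1 + 1/2 by norm_num, Real.rpow_add hα, Real.rpow_one, ← Real.sqrt_eq_rpow]
  rw [hsqrt, hα32]
  have hsqαpos : 0 < Real.sqrt α := Real.sqrt_pos.mpr hα
  have hsqπpos : 0 < Real.sqrt π := Real.sqrt_pos.mpr hπ0
  field_simp
  ring
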